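/- Let K be a finite group in which any two elements of order 3 commute, and let E be the subgroup generated by all elements of order 3 of K. Suppose every element of K has order dividing 6. Then there exists a right transversal of E in K consisting of the identity and elements of order 2. -/

import Mathlib

/-- Let `K` be a finite group in which any two elements of order `3` commute and
every element has order dividing `6`, and let `E` be the subgroup generated by all
elements of order `3`.  Then there is a right transversal of `E` in `K` consisting
of the identity and involutions. -/
theorem exists_right_transversal_of_involutions {K : Type*} [Group K] [Finite K]
    (hcomm : ∀ g h : K, orderOf g = 3 → orderOf h = 3 → g * h = h * g)
    (hexp : ∀ g : K, orderOf g ∣ 6)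
    (E : Subgroup K) (hE : E = Subgroup.closure {g : K | orderOf g = 3}) :
    ∃ T : Set K, Subgroup.IsComplement (E : Set K) T ∧
      ∀ t ∈ T, t = 1 ∨ orderOf t = 2 := by
  classical
  -- every square lies in E
  have hsq : ∀ g : K, g ^ 2 ∈ E := by
    intro g
    have h3 : (g ^ 2) ^ 3 = 1 := by
      rw [← pow_mul]
      exact orderOf_dvd_iff_pow_eq_one.mp (by simpa using hexp g)
    have hdvd : orderOf (g ^ 2) ∣ 3 := orderOf_dvd_iff_pow_eq_one.mpr h3
    rcases (Nat.Prime.eq_one_or_self_of_dvd (by norm_num) _ hdvd) with h | h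
    · have : g ^ 2 = 1 := by
        have := orderOf_eq_one_iff.mp h
        simpa using this
      rw [this]; exact one_mem E
    · rw [hE]
      exact Subgroup.subset_closure h
  set f : Quotient (QuotientGroup.rightRel E) → K :=
    fun q => (Quotient.out q) ^ 3 with hf
  have hfq : ∀ q, Quotient.mk'' (f q) = q := by
    intro q
    have : (Quotient.mk'' ((Quotient.out q) ^ 3) : Quotient (QuotientGroup.rightRel E)) =
        Quotient.mk'' (Quotient.out q) := by
      apply Quotient.sound'
      rw [QuotientGroup.rightRel_apply]
      have : Quotient.out q * ((Quotient.out q) ^ 3)⁻¹ = ((Quotient.out q) ^ 2)⁻¹ := by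
        group
      rw [this]
      exact inv_mem (hsq _)
    rw [hf]
    simpa [Quotient.out_eq'] using this
  refine ⟨Set.range f, Subgroup.isComplement_range_right hfq, ?_⟩
  rintro t ⟨q, rfl⟩
  have h2 : (f q) ^ 2 = 1 := by
    rw [hf]
    simp only
    rw [← pow_mul]
    exact orderOf_dvd_iff_pow_eq_one.mp (by simpa [mul_comm] using hexp (Quotient.out q))
  have hdvd : orderOf (f q) ∣ 2 := orderOf_dvd_iff_pow_eq_one.mpr h2
  rcases (Nat.Prime.eq_one_or_self_of_dvd (by norm_num) _ hdvd) with h | h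
  · exact Or.inl (orderOf_eq_one_iff.mp h)
  · exact Or.inr h
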